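/- Let A and B be countable, locally finite structures each linearly ordered by a binary relation < in its language. If A is a semi-retraction of B and age(B) has the Ramsey property, then age(A) has the Ramsey property. -/

import Mathlib

open FirstOrder FirstOrder.Language FirstOrder.Language.Structure CategoryTheory

namespace SRPaper

/-- Two tuples from `M` have the same complete quantifier-free type:
they satisfy the same quantifier-free formulas. -/
def SameQfTp (L : Language) (M : Type*) [L.Structure M] {n : ℕ} (a b : Fin n → M) : Prop :=
  ∀ φ : L.Formula (Fin n), φ.IsQF → (φ.Realize a ↔ φ.Realize b)

/-- A map is quantifier-free-type-preserving if tuples with the same complete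
quantifier-free type are sent to tuples with the same complete quantifier-free type. -/
def QfTpPreserving (LA : Language) (A : Type*) [LA.Structure A]
    (LB : Language) (B : Type*) [LB.Structure B] (h : A → B) : Prop :=
  ∀ (n : ℕ) (a b : Fin n → A), SameQfTp LA A a b → SameQfTp LB B (h ∘ a) (h ∘ b)

/-- `g : A → B` and `f : B → A` witness that `A` is a semi-retraction of `B`. -/
def SemiRetractionWitness (LA : Language) (A : Type*) [LA.Structure A]
    (LB : Language) (B : Type*) [LB.Structure B] (g : A → B) (f : B → A) : Prop :=
  Function.Injective g ∧ Function.Injective f ∧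
    QfTpPreserving LA A LB B g ∧ QfTpPreserving LB B LA A f ∧
    ∀ (n : ℕ) (φ : LA.Formula (Fin n)), φ.IsQF →
      ∀ s : Fin n → A, φ.Realize s → φ.Realize (f ∘ g ∘ s)

/-- `A` is a semi-retraction of `B`. -/
def IsSemiRetractionOf (LA : Language) (A : Type*) [LA.Structure A]
    (LB : Language) (B : Type*) [LB.Structure B] : Prop :=
  ∃ (g : A → B) (f : B → A), SemiRetractionWitness LA A LB B g f

/-- The Ramsey property for a class of structures `K`: for all `A B ∈ K` and `k ≥ 1` there is
`C ∈ K` such that every `k`-coloring of substructures of `C` admits a copy `B'` of `B` in `C`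
on which the color of copies of `A` is constant. -/
def RamseyClass (L : Language) (K : Set (Bundled L.Structure)) : Prop :=
  ∀ A B : Bundled L.Structure, A ∈ K → B ∈ K → ∀ k : ℕ, 1 ≤ k →
    ∃ C : Bundled L.Structure, C ∈ K ∧
      ∀ c : L.Substructure C → Fin k,
        ∃ B' : L.Substructure C, Nonempty (B ≃[L] B') ∧
          ∀ A₁ A₂ : L.Substructure C, A₁ ≤ B' → A₂ ≤ B' →
            Nonempty (A ≃[L] A₁) → Nonempty (A ≃[L] A₂) → c A₁ = c A₂

/-- A countable structure has the Ramsey property if its age does. -/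
def HasRP (L : Language) (M : Type*) [L.Structure M] : Prop :=
  RamseyClass L (L.age M)

/-- `(a i : i ∈ I)` is an `I`-indexed indiscernible set of `d`-tuples in `U`. -/
def IndexedIndiscernible (L' : Language) (I : Type*) [L'.Structure I]
    (L : Language) (U : Type*) [L.Structure U] (d : ℕ) (a : I → Fin d → U) : Prop :=
  ∀ (n : ℕ) (ι κ : Fin n → I), SameQfTp L' I ι κ →
    ∀ φ : L.Formula (Fin n × Fin d),
      (φ.Realize fun p => a (ι p.1) p.2) ↔ (φ.Realize fun p => a (κ p.1) p.2)

/-- `Y` realizes the EM-type of `X`: any formula satisfied by all `X`-tuples whose index tuple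
has a given complete quantifier-free type in `I` is satisfied by the corresponding `Y`-tuple. -/
def LocallyBased (L' : Language) (I : Type*) [L'.Structure I]
    (L : Language) (U : Type*) [L.Structure U] (d : ℕ) (X Y : I → Fin d → U) : Prop :=
  ∀ (n : ℕ) (φ : L.Formula (Fin n × Fin d)) (ι : Fin n → I),
    (∀ κ : Fin n → I, SameQfTp L' I ι κ → φ.Realize fun p => X (κ p.1) p.2) →
    (φ.Realize fun p => Y (ι p.1) p.2)

/-- `U` realizes every finitely-satisfiable set of formulas in one free variable with
countably many parameters: "sufficient saturation" for countable index structures. -/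
def AlephOneSaturated (L : Language) (U : Type*) [L.Structure U] : Prop :=
  ∀ (p : ℕ → U) (Φ : Set (L.Formula (ℕ ⊕ Fin 1))),
    (∀ Φ₀ : Finset (L.Formula (ℕ ⊕ Fin 1)), ↑Φ₀ ⊆ Φ →
      ∃ x : U, ∀ φ ∈ Φ₀, Formula.Realize φ (Sum.elim p fun _ => x)) →
    ∃ x : U, ∀ φ ∈ Φ, Formula.Realize φ (Sum.elim p fun _ => x)

/-- `I`-indexed indiscernible sets have the modeling property: in any sufficiently saturated
structure `U`, any `I`-indexed set of same-length tuples admits an `I`-indexed indiscernible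
set in `U` locally based on it. -/
def ModelingProperty (L' : Language) (I : Type*) [L'.Structure I] : Prop :=
  ∀ (L : FirstOrder.Language.{0, 0}) (U : Type) [L.Structure U], AlephOneSaturated L U →
    ∀ (d : ℕ) (X : I → Fin d → U),
      ∃ Y : I → Fin d → U,
        IndexedIndiscernible L' I L U d Y ∧ LocallyBased L' I L U d X Y

section Aux

open FirstOrder FirstOrder.Language FirstOrder.Language.Structure Set

variable {L : Language} {M : Type*} {N : Type*} [L.Structure M] [L.Structure N]

namespace SRAux

theorem sameQfTp_refl {n : ℕ} (a : Fin n → M) : SameQfTp L M a a := fun _ _ => Iff.rfl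

theorem sameQfTp_symm {n : ℕ} {a b : Fin n → M} (h : SameQfTp L M a b) : SameQfTp L M b a :=
  fun φ hφ => (h φ hφ).symm

theorem sameQfTp_trans {n : ℕ} {a b c : Fin n → M} (h1 : SameQfTp L M a b)
    (h2 : SameQfTp L M b c) : SameQfTp L M a c := fun φ hφ => (h1 φ hφ).trans (h2 φ hφ)

theorem sameQfTp_comp {n m : ℕ} {a b : Fin n → M} (h : SameQfTp L M a b) (r : Fin m → Fin n) :
    SameQfTp L M (a ∘ r) (b ∘ r) := by
  intro φ hφ
  have h2 := h (φ.relabel r) (hφ.relabel (Sum.inl ∘ r))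
  rwa [Formula.realize_relabel, Formula.realize_relabel] at h2

theorem isQF_subst {α β : Type*} {k : ℕ} {φ : L.BoundedFormula α k} (h : φ.IsQF)
    (f : α → L.Term β) : (φ.subst f).IsQF := by
  induction h with
  | falsum => exact BoundedFormula.isQF_bot
  | of_isAtomic h =>
    cases h with
    | equal t₁ t₂ => exact (BoundedFormula.IsAtomic.equal _ _).isQF
    | rel R ts => exact (BoundedFormula.IsAtomic.rel _ _).isQF
  | imp _ _ ih1 ih2 => exact ih1.imp ih2

theorem sameQfTp_terms {n N' : ℕ} {a b : Fin n → M} (h : SameQfTp L M a b)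
    (t : Fin N' → L.Term (Fin n)) :
    SameQfTp L M (fun j => (t j).realize a) (fun j => (t j).realize b) := by
  intro φ hφ
  have h2 := h (φ.subst t) (isQF_subst hφ t)
  rwa [Formula.Realize, Formula.Realize, BoundedFormula.realize_subst,
    BoundedFormula.realize_subst] at h2

theorem sameQfTp_term_eq {n : ℕ} {a b : Fin n → M} (h : SameQfTp L M a b)
    {t u : L.Term (Fin n)} (ht : t.realize a = u.realize a) : t.realize b = u.realize b := by
  have h2 := h (t.equal u) (BoundedFormula.IsAtomic.equal _ _).isQF
  rw [Formula.realize_equal, Formula.realize_equal] at h2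
  exact h2.1 ht

theorem sameQfTp_rel_iff {n l : ℕ} {a b : Fin n → M} (h : SameQfTp L M a b)
    {R : L.Relations l} {ts : Fin l → L.Term (Fin n)} :
    (RelMap R fun i => (ts i).realize a) ↔ (RelMap R fun i => (ts i).realize b) := by
  have h2 := h (R.formula ts) (BoundedFormula.IsAtomic.rel _ _).isQF
  rwa [Formula.realize_rel, Formula.realize_rel] at h2

theorem embedding_realize_qf (g : M ↪[L] N) {α : Type*} {k : ℕ} {φ : L.BoundedFormula α k}
    (hφ : φ.IsQF) (v : α → M) (xs : Fin k → M) :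
    φ.Realize (⇑g ∘ v) (⇑g ∘ xs) ↔ φ.Realize v xs := by
  induction hφ with
  | falsum => exact Iff.rfl
  | of_isAtomic h =>
    cases h with
    | equal t₁ t₂ =>
      rw [BoundedFormula.realize_bdEqual, BoundedFormula.realize_bdEqual, ← Sum.comp_elim,
        HomClass.realize_term, HomClass.realize_term]
      exact ⟨fun h' => g.injective h', fun h' => congrArg g h'⟩
    | rel R ts =>
      rw [BoundedFormula.realize_rel, BoundedFormula.realize_rel, ← Sum.comp_elim]
      simp only [HomClass.realize_term]
      exact StrongHomClass.map_rel g _ _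
  | imp _ _ ih1 ih2 =>
    rw [BoundedFormula.realize_imp, BoundedFormula.realize_imp, ih1, ih2]

theorem embedding_realize_qf_formula (g : M ↪[L] N) {n : ℕ} {φ : L.Formula (Fin n)}
    (hφ : φ.IsQF) (v : Fin n → M) : φ.Realize (⇑g ∘ v) ↔ φ.Realize v := by
  have h2 := embedding_realize_qf g hφ v default
  rw [Formula.Realize, Formula.Realize]
  convert h2 using 2

theorem exists_term_of_mem_closure {n : ℕ} {v : Fin n → M} {x : M}
    (h : x ∈ Substructure.closure L (Set.range v)) :
    ∃ t : L.Term (Fin n), t.realize v = x := by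
  obtain ⟨t, ht⟩ := Substructure.mem_closure_iff_exists_term.1 h
  refine ⟨t.relabel fun s => s.2.choose, ?_⟩
  rw [Term.realize_relabel]
  rw [← ht]
  congr 1
  funext s
  exact s.2.choose_spec

theorem term_realize_mem_closure {n : ℕ} (v : Fin n → M) (t : L.Term (Fin n)) :
    t.realize v ∈ Substructure.closure L (Set.range v) :=
  Term.realize_mem t v fun i => Substructure.subset_closure (Set.mem_range_self i)

/-- Transfer of enumerations of generated substructures along tuples of equal qf type. -/
theorem enum_transfer {n NN : ℕ} {v w : Fin n → M} (h : SameQfTp L M v w)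
    {V : Fin NN → M} (hV : Set.range V = (Substructure.closure L (Set.range v) : Set M))
    {p : Fin n → Fin NN} (hp : V ∘ p = v) :
    ∃ W : Fin NN → M, SameQfTp L M V W ∧
      Set.range W = (Substructure.closure L (Set.range w) : Set M) ∧ W ∘ p = w := by
  have hVj : ∀ j, ∃ t : L.Term (Fin n), t.realize v = V j := fun j =>
    exists_term_of_mem_closure (by rw [← SetLike.mem_coe, ← hV]; exact Set.mem_range_self j)
  choose t ht using hVj
  have hteq : (fun j => (t j).realize v) = V := funext ht
  refine ⟨fun j => (t j).realize w, ?_, ?_, ?_⟩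
  · have h2 := sameQfTp_terms h t
    rwa [hteq] at h2
  · apply Set.Subset.antisymm
    · rintro x ⟨j, rfl⟩
      exact term_realize_mem_closure w (t j)
    · intro x hx
      obtain ⟨u, hu⟩ := exists_term_of_mem_closure hx
      have h3 : u.realize v ∈ Set.range V := by
        rw [hV]; exact term_realize_mem_closure v u
      obtain ⟨j, hj⟩ := h3
      have h4 : (t j).realize v = u.realize v := by rw [ht j, hj]
      refine ⟨j, ?_⟩
      show (t j).realize w = x
      rw [sameQfTp_term_eq h h4, hu]
  · funext i
    have h4 : (t (p i)).realize v = (Term.var i : L.Term (Fin n)).realize v := by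
      show (t (p i)).realize v = v i
      rw [ht (p i), ← hp]; rfl
    have := sameQfTp_term_eq h h4
    simpa using this

theorem range_closed_transfer {n : ℕ} {v w : Fin n → M} (h : SameQfTp L M v w)
    (hv : (Substructure.closure L (Set.range v) : Set M) = Set.range v) :
    (Substructure.closure L (Set.range w) : Set M) = Set.range w := by
  obtain ⟨W, _, hr, hid⟩ := enum_transfer h hv.symm (show v ∘ id = v from rfl)
  rw [Function.comp_id] at hid
  rw [← hid] at hr ⊢
  exact hr.symm

/-- Tuples of the same qf type generate isomorphic substructures. -/
theorem nonempty_iso_of_sameQfTp {n : ℕ} {v w : Fin n → M} (h : SameQfTp L M v w) :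
    Nonempty (↥(Substructure.closure L (Set.range v)) ≃[L]
      ↥(Substructure.closure L (Set.range w))) := by
  classical
  have hterm1 : ∀ x : ↥(Substructure.closure L (Set.range v)),
      ∃ t : L.Term (Fin n), t.realize v = ↑x := fun x => exists_term_of_mem_closure x.2
  have hterm2 : ∀ y : ↥(Substructure.closure L (Set.range w)),
      ∃ t : L.Term (Fin n), t.realize w = ↑y := fun y => exists_term_of_mem_closure y.2
  choose tv htv using hterm1
  choose tw htw using hterm2
  set F : ↥(Substructure.closure L (Set.range v)) → ↥(Substructure.closure L (Set.range w)) :=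
    fun x => ⟨(tv x).realize w, term_realize_mem_closure w (tv x)⟩ with hF
  set G : ↥(Substructure.closure L (Set.range w)) → ↥(Substructure.closure L (Set.range v)) :=
    fun y => ⟨(tw y).realize v, term_realize_mem_closure v (tw y)⟩ with hG
  have keyF : ∀ (x : ↥(Substructure.closure L (Set.range v))) (t : L.Term (Fin n)),
      t.realize v = ↑x → (F x : M) = t.realize w := by
    intro x t ht
    exact sameQfTp_term_eq h (by rw [htv x, ht])
  have keyG : ∀ (y : ↥(Substructure.closure L (Set.range w))) (t : L.Term (Fin n)),
      t.realize w = ↑y → (G y : M) = t.realize v := by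
    intro y t ht
    exact sameQfTp_term_eq (sameQfTp_symm h) (by rw [htw y, ht])
  have hleft : ∀ x, G (F x) = x := by
    intro x
    apply Subtype.ext
    rw [keyG (F x) (tv x) rfl, htv x]
  have hright : ∀ y, F (G y) = y := by
    intro y
    apply Subtype.ext
    rw [keyF (G y) (tw y) rfl, htw y]
  refine ⟨⟨⟨F, G, hleft, hright⟩, ?_, ?_⟩⟩
  · intro k fn x
    apply Subtype.ext
    have h1 : (Term.func fn fun i => tv (x i) : L.Term (Fin n)).realize v = ↑(funMap fn x) := by
      show funMap fn (fun i => (tv (x i)).realize v) = _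
      have : (fun i => (tv (x i)).realize v) = fun i => ↑(x i) := funext fun i => htv (x i)
      rw [this]; rfl
    have h2 := keyF _ _ h1
    show (F (funMap fn x) : M) = ↑(funMap fn (F ∘ x))
    rw [h2]
    show funMap fn (fun i => (tv (x i)).realize w) = funMap fn fun i => ((F ∘ x) i : M)
    rfl
  · intro k r x
    show RelMap r (fun i => ((F ∘ x) i : M)) ↔ RelMap r (fun i => (x i : M))
    have h1 : (fun i => ((F ∘ x) i : M)) = fun i => (tv (x i)).realize w := rfl
    have h2 : (fun i => (x i : M)) = fun i => (tv (x i)).realize v :=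
      funext fun i => (htv (x i)).symm
    rw [h1, h2]
    exact (sameQfTp_rel_iff h (R := r) (ts := fun i => tv (x i))).symm

theorem comap_map_self (f : M ↪[L] N) (S : L.Substructure M) :
    (S.map f.toHom).comap f.toHom = S := by
  ext x
  simp only [Substructure.mem_comap, Substructure.mem_map]
  constructor
  · rintro ⟨y, hy, he⟩
    have hyx : y = x := f.injective (by simpa using he)
    rwa [← hyx]
  · intro hx; exact ⟨x, hx, rfl⟩

theorem map_comap_subtype {S T : L.Substructure M} (h : S ≤ T) :
    (S.comap T.subtype.toHom).map T.subtype.toHom = S := by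
  ext x
  simp only [Substructure.mem_map, Substructure.mem_comap]
  constructor
  · rintro ⟨y, hy, rfl⟩; exact hy
  · intro hx; exact ⟨⟨x, h hx⟩, hx, rfl⟩

theorem nonempty_equiv_of_eq {S T : L.Substructure M} (h : S = T) :
    Nonempty (↥S ≃[L] ↥T) := by subst h; exact ⟨FirstOrder.Language.Equiv.refl L ↥S⟩

theorem coe_map_subtype (T : L.Substructure M) (S : L.Substructure ↥T) :
    ((S.map T.subtype.toHom : L.Substructure M) : Set M) = Subtype.val '' (S : Set ↥T) := by
  ext x
  simp only [SetLike.mem_coe, Substructure.mem_map, Set.mem_image]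
  constructor
  · rintro ⟨y, hy, rfl⟩; exact ⟨y, hy, rfl⟩
  · rintro ⟨y, hy, rfl⟩; exact ⟨y, hy, rfl⟩


theorem sameQfTp_strictMono {n : ℕ} [LinearOrder M] (lt : L.Relations 2)
    (hlt : ∀ x y : M, RelMap lt ![x, y] ↔ x < y) {a b : Fin n → M}
    (h : SameQfTp L M a b) (ha : StrictMono a) : StrictMono b := by
  have e1 : ∀ (c : Fin n → M) (i j : Fin n),
      (fun k => ((![Term.var i, Term.var j] : Fin 2 → L.Term (Fin n)) k).realize c)
        = ![c i, c j] := by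
    intro c i j
    funext k
    fin_cases k <;> simp [Term.realize]
  intro i j hij
  have key := sameQfTp_rel_iff h (R := lt) (ts := ![Term.var i, Term.var j])
  rw [e1 a i j, e1 b i j, hlt, hlt] at key
  exact key.1 (ha hij)

theorem finite_of_fg_embedding (hfg : Structure.FG L M) (e : M ↪[L] N)
    (hloc : ∀ S : L.Substructure N, S.FG → (S : Set N).Finite) : Finite M := by
  have h1 : (Hom.range e.toHom).FG := hfg.range e.toHom
  have h2 := hloc _ h1
  have h3 : Set.range ⇑e ⊆ (Hom.range e.toHom : Set N) := by
    rintro x ⟨y, rfl⟩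
    exact Hom.mem_range.2 ⟨y, rfl⟩
  haveI := (h2.subset h3).to_subtype
  exact Finite.of_injective (fun m => (⟨e m, Set.mem_range_self m⟩ : Set.range ⇑e))
    fun a b hab => e.injective (congrArg Subtype.val hab)

end SRAux

end Aux

end SRPaper

open SRPaper in
/-- For countable, locally finite, linearly ordered structures `A` and `B`,
if `A` is a semi-retraction of `B` and `age(B)` has the Ramsey property, then `age(A)` has
the Ramsey property. -/
theorem statement3 (LA : Language) (A : Type) [LA.Structure A] [Countable A] [LinearOrder A]
    (ltA : LA.Relations 2) (hltA : ∀ a b : A, Structure.RelMap ltA ![a, b] ↔ a < b)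
    (hlocfinA : ∀ S : LA.Substructure A, S.FG → (S : Set A).Finite)
    (LB : Language) (B : Type) [LB.Structure B] [Countable B] [LinearOrder B]
    (ltB : LB.Relations 2) (hltB : ∀ a b : B, Structure.RelMap ltB ![a, b] ↔ a < b)
    (hlocfinB : ∀ S : LB.Substructure B, S.FG → (S : Set B).Finite)
    (hsr : IsSemiRetractionOf LA A LB B)
    (hRP : RamseyClass LB (LB.age B)) :
    RamseyClass LA (LA.age A) := by
  classical
  obtain ⟨g, f, hginj, hfinj, hgP, hfP, hfgr⟩ := hsr
  have hretr : ∀ {nn : ℕ} (s : Fin nn → A), SameQfTp LA A s (fun i => f (g (s i))) := by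
    intro nn s φ hφ
    constructor
    · exact hfgr nn φ hφ s
    · intro h2
      by_contra hns
      have h3 := hfgr nn φ.not hφ.not s (Formula.realize_not.2 hns)
      rw [Formula.realize_not] at h3
      exact h3 h2
  intro A₀ B₀ hA₀ hB₀ k hk
  obtain ⟨hA₀fg, ⟨ea⟩⟩ := hA₀
  obtain ⟨hB₀fg, ⟨eb⟩⟩ := hB₀
  haveI finA₀ : Finite ↥A₀ := SRAux.finite_of_fg_embedding hA₀fg ea hlocfinA
  haveI finB₀ : Finite ↥B₀ := SRAux.finite_of_fg_embedding hB₀fg eb hlocfinA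
  obtain ⟨m, ⟨ahe⟩⟩ := Finite.exists_equiv_fin ↥A₀
  obtain ⟨mb, ⟨bhe⟩⟩ := Finite.exists_equiv_fin ↥B₀
  set ah := ahe.symm with hahdef
  set bh := bhe.symm with hbhdef
  set abar : Fin m → A := fun i => ea (ah i) with habardef
  set bbar0 : Fin mb → A := fun i => eb (bh i) with hbbar0def
  set ga : Fin m → B := fun i => g (abar i) with hgadef
  set gb : Fin mb → B := fun i => g (bbar0 i) with hgbdef
  set A1s : LB.Substructure B := Substructure.closure LB (Set.range ga) with hA1sdef
  set B1s : LB.Substructure B := Substructure.closure LB (Set.range gb) with hB1sdef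
  have hA1fin : ((A1s : Set B)).Finite :=
    hlocfinB _ (Substructure.fg_closure (Set.finite_range ga))
  have hB1fin : ((B1s : Set B)).Finite :=
    hlocfinB _ (Substructure.fg_closure (Set.finite_range gb))
  set sA : Finset B := hA1fin.toFinset with hsAdef
  set sB : Finset B := hB1fin.toFinset with hsBdef
  set mst := sA.card with hmstdef
  set mbst := sB.card with hmbstdef
  set astar : Fin mst → B := ⇑(sA.orderEmbOfFin rfl) with hastardef
  set bstar : Fin mbst → B := ⇑(sB.orderEmbOfFin rfl) with hbstardef
  have hastar_mono : StrictMono astar := (sA.orderEmbOfFin rfl).strictMono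
  have hbstar_mono : StrictMono bstar := (sB.orderEmbOfFin rfl).strictMono
  have hastar_range : Set.range astar = (A1s : Set B) := by
    rw [hastardef, Finset.range_orderEmbOfFin]
    exact hA1fin.coe_toFinset
  have hbstar_range : Set.range bstar = (B1s : Set B) := by
    rw [hbstardef, Finset.range_orderEmbOfFin]
    exact hB1fin.coe_toFinset
  have hpA : ∀ i, ∃ j, astar j = ga i := by
    intro i
    have h1 : ga i ∈ Set.range astar := by
      rw [hastar_range]
      exact Substructure.subset_closure (Set.mem_range_self i)
    exact h1
  have hqB : ∀ i, ∃ j, bstar j = gb i := by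
    intro i
    have h1 : gb i ∈ Set.range bstar := by
      rw [hbstar_range]
      exact Substructure.subset_closure (Set.mem_range_self i)
    exact h1
  set p : Fin m → Fin mst := fun i => (hpA i).choose with hpdef
  set q : Fin mb → Fin mbst := fun i => (hqB i).choose with hqdef
  have hp : ∀ i, astar (p i) = ga i := fun i => (hpA i).choose_spec
  have hq : ∀ i, bstar (q i) = gb i := fun i => (hqB i).choose_spec
  set Abar : Bundled LB.Structure := ⟨↥A1s, inferInstance⟩ with hAbardef
  set Bbar : Bundled LB.Structure := ⟨↥B1s, inferInstance⟩ with hBbardef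
  have hAbar : Abar ∈ LB.age B :=
    ⟨(A1s.fg_iff_structure_fg).1 (Substructure.fg_closure (Set.finite_range ga)),
      ⟨A1s.subtype⟩⟩
  have hBbar : Bbar ∈ LB.age B :=
    ⟨(B1s.fg_iff_structure_fg).1 (Substructure.fg_closure (Set.finite_range gb)),
      ⟨B1s.subtype⟩⟩
  obtain ⟨Cst, hCstage, hRam⟩ := hRP Abar Bbar hAbar hBbar k hk
  obtain ⟨hCfg, ⟨e⟩⟩ := hCstage
  haveI finCst : Finite ↥Cst := SRAux.finite_of_fg_embedding hCfg e hlocfinB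
  set Csub : LA.Substructure A := Substructure.closure LA (f '' Set.range ⇑e) with hCsubdef
  have hCsubfg : Csub.FG := Substructure.fg_closure ((Set.finite_range ⇑e).image f)
  refine ⟨⟨↥Csub, inferInstance⟩, ⟨(Csub.fg_iff_structure_fg).1 hCsubfg, ⟨Csub.subtype⟩⟩, ?_⟩
  intro c
  set subC : (Fin m → A) → LA.Substructure ↥Csub :=
    fun wv => (Substructure.closure LA (Set.range wv)).comap Csub.subtype.toHom with hsubCdef
  set cstar : LB.Substructure ↥Cst → Fin k := fun D =>
    if h : ∃ d : Fin mst → B, SameQfTp LB B astar d ∧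
        Set.range d = ((D.map e.toHom : LB.Substructure B) : Set B)
    then c (subC (fun i => f (h.choose (p i)))) else ⟨0, hk⟩ with hcstardef
  obtain ⟨B's, ⟨θ⟩, hmono⟩ := hRam cstar
  have hbmem : ∀ j, bstar j ∈ B1s := by
    intro j
    rw [← SetLike.mem_coe, ← hbstar_range]
    exact Set.mem_range_self j
  set bhat : Fin mbst → ↥B1s := fun j => ⟨bstar j, hbmem j⟩ with hbhatdef
  set u' : Fin mbst → ↥Cst := fun j => B's.subtype (θ (bhat j)) with hu'def
  set ub : Fin mbst → B := fun j => e (u' j) with hubdef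
  have h2 : SameQfTp LB B bstar ub := by
    intro φ hφ
    calc φ.Realize bstar
        ↔ φ.Realize bhat := SRAux.embedding_realize_qf_formula B1s.subtype hφ bhat
      _ ↔ φ.Realize (⇑θ ∘ bhat) := (StrongHomClass.realize_formula θ φ).symm
      _ ↔ φ.Realize (⇑B's.subtype ∘ (⇑θ ∘ bhat)) :=
          (SRAux.embedding_realize_qf_formula B's.subtype hφ (⇑θ ∘ bhat)).symm
      _ ↔ φ.Realize ub :=
          (SRAux.embedding_realize_qf_formula e hφ (⇑B's.subtype ∘ (⇑θ ∘ bhat))).symm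
  have hmemB's : ∀ j, u' j ∈ B's := fun j => (θ (bhat j)).2
  set fuq : Fin mb → A := fun i => f (ub (q i)) with hfuqdef
  have hbbar0fuq : SameQfTp LA A bbar0 fuq := by
    have h3 : SameQfTp LB B (bstar ∘ q) (ub ∘ q) := SRAux.sameQfTp_comp h2 q
    rw [show bstar ∘ q = gb from funext hq] at h3
    have h4 := hfP _ _ _ h3
    exact SRAux.sameQfTp_trans (hretr bbar0) h4
  have hbbar0r : Set.range bbar0 = (Hom.range eb.toHom : Set A) := by
    ext x
    constructor
    · rintro ⟨i, rfl⟩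
      exact Hom.mem_range.2 ⟨bh i, rfl⟩
    · rintro ⟨y, rfl⟩
      exact ⟨bh.symm y, by simp [hbbar0def, hbhdef]⟩
  have hcl2 : Substructure.closure LA (Set.range bbar0) = Hom.range eb.toHom := by
    rw [hbbar0r, Substructure.closure_eq]
  have hbbar0closed : (↑(Substructure.closure LA (Set.range bbar0)) : Set A) = Set.range bbar0 := by
    rw [hcl2, ← hbbar0r]
  set SB : LA.Substructure A := Substructure.closure LA (Set.range fuq) with hSBdef
  have hSBrange : (SB : Set A) = Set.range fuq :=
    SRAux.range_closed_transfer hbbar0fuq hbbar0closed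
  have hSBle : SB ≤ Csub := by
    rw [hSBdef, hCsubdef]
    apply Substructure.closure_le.2
    rintro x ⟨i, rfl⟩
    exact Substructure.subset_closure ⟨e (u' (q i)), ⟨u' (q i), rfl⟩, rfl⟩
  set B' : LA.Substructure ↥Csub := SB.comap Csub.subtype.toHom with hB'def
  have hB'map : B'.map Csub.subtype.toHom = SB := SRAux.map_comap_subtype hSBle
  have hclosed_astar : (↑(Substructure.closure LB (Set.range astar)) : Set B)
      = Set.range astar := by
    rw [hastar_range, Substructure.closure_eq]
  have key : ∀ A₁ : LA.Substructure ↥Csub, A₁ ≤ B' → Nonempty (↥A₀ ≃[LA] ↥A₁) →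
      ∃ D : LB.Substructure ↥Cst, D ≤ B's ∧ Nonempty (↥Abar ≃[LB] ↥D) ∧ c A₁ = cstar D := by
    rintro A₁ hA₁le ⟨ψ⟩
    set ebar : Fin m → A := fun i => Csub.subtype (A₁.subtype (ψ (ah i))) with hebardef
    have h_ebar_tp : SameQfTp LA A abar ebar := by
      intro φ hφ
      calc φ.Realize abar
          ↔ φ.Realize ⇑ah := SRAux.embedding_realize_qf_formula ea hφ ⇑ah
        _ ↔ φ.Realize (⇑ψ ∘ ⇑ah) := (StrongHomClass.realize_formula ψ φ).symm
        _ ↔ φ.Realize (⇑A₁.subtype ∘ (⇑ψ ∘ ⇑ah)) :=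
            (SRAux.embedding_realize_qf_formula A₁.subtype hφ (⇑ψ ∘ ⇑ah)).symm
        _ ↔ φ.Realize ebar :=
            (SRAux.embedding_realize_qf_formula Csub.subtype hφ
              (⇑A₁.subtype ∘ (⇑ψ ∘ ⇑ah))).symm
    have h5 : Set.range (fun i => A₁.subtype (ψ (ah i))) = (A₁ : Set ↥Csub) := by
      ext x
      constructor
      · rintro ⟨i, rfl⟩
        exact (ψ (ah i)).2
      · intro hx
        refine ⟨ah.symm (ψ.symm ⟨x, hx⟩), ?_⟩
        simp
    have hrange_ebar : Set.range ebar = Subtype.val '' (A₁ : Set ↥Csub) := by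
      rw [hebardef, show (fun i => Csub.subtype (A₁.subtype (ψ (ah i))))
        = Subtype.val ∘ (fun i => A₁.subtype (ψ (ah i))) from rfl, Set.range_comp, h5]
    have hebarsub : ∀ i, ∃ j, fuq j = ebar i := by
      intro i
      have h6 : ebar i ∈ Subtype.val '' (A₁ : Set ↥Csub) := by
        rw [← hrange_ebar]; exact Set.mem_range_self i
      have h7 : ebar i ∈ (SB : Set A) := by
        obtain ⟨y, hy, hyx⟩ := h6
        have h8 : y ∈ B' := hA₁le hy
        rw [hB'def, Substructure.mem_comap] at h8
        rw [← hyx]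
        exact h8
      rw [hSBrange] at h7
      exact h7
    choose r hr using hebarsub
    have h7 : SameQfTp LA A (fun i => bbar0 (r i)) ebar := by
      have h8 := SRAux.sameQfTp_comp hbbar0fuq r
      rwa [show fuq ∘ r = ebar from funext hr] at h8
    have h6 : SameQfTp LA A abar (fun i => bbar0 (r i)) :=
      SRAux.sameQfTp_trans h_ebar_tp (SRAux.sameQfTp_symm h7)
    have h8 : SameQfTp LB B ga (fun i => g (bbar0 (r i))) := hgP _ _ _ h6
    obtain ⟨W, hW_tp, hWrange, hWp⟩ :=
      SRAux.enum_transfer h8 hastar_range (show astar ∘ p = ga from funext hp)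
    have hWsub : ∀ j, ∃ jj, bstar jj = W j := by
      intro j
      have h9 : W j ∈ Set.range bstar := by
        rw [hbstar_range]
        have h10 : W j ∈
            (Substructure.closure LB (Set.range fun i => g (bbar0 (r i))) : Set B) := by
          rw [← hWrange]; exact Set.mem_range_self j
        refine SetLike.coe_subset_coe.2 (Substructure.closure_mono ?_) h10
        rintro x ⟨i, rfl⟩
        exact ⟨r i, rfl⟩
      exact h9
    choose s hs using hWsub
    set d : Fin mst → B := fun j => ub (s j) with hddef
    have hd_tp : SameQfTp LB B astar d := by
      have h9 := SRAux.sameQfTp_comp h2 s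
      rw [show bstar ∘ s = W from funext hs] at h9
      exact SRAux.sameQfTp_trans hW_tp h9
    have hsp : ∀ i, s (p i) = q (r i) := by
      intro i
      apply hbstar_mono.injective
      rw [hs (p i), hq (r i)]
      exact congrFun hWp i
    have hdp : ∀ i, f (d (p i)) = ebar i := by
      intro i
      show f (ub (s (p i))) = ebar i
      rw [hsp i]
      exact hr i
    set D : LB.Substructure ↥Cst := Substructure.closure LB (Set.range fun j => u' (s j))
      with hDdef
    have hDmap : D.map e.toHom = Substructure.closure LB (Set.range d) := by
      rw [hDdef, Substructure.map_closure, ← Set.range_comp]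
      rfl
    have hDcoe : ((D.map e.toHom : LB.Substructure B) : Set B) = Set.range d := by
      rw [hDmap]
      exact SRAux.range_closed_transfer hd_tp hclosed_astar
    have hDle : D ≤ B's := by
      rw [hDdef]
      apply Substructure.closure_le.2
      rintro x ⟨j, rfl⟩
      exact hmemB's (s j)
    have hDiso : Nonempty (↥Abar ≃[LB] ↥D) := by
      have hone : Substructure.closure LB (Set.range astar) = A1s := by
        rw [hastar_range, Substructure.closure_eq]
      obtain ⟨n1⟩ := SRAux.nonempty_equiv_of_eq hone.symm
      obtain ⟨n2⟩ := SRAux.nonempty_iso_of_sameQfTp hd_tp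
      obtain ⟨n3⟩ := SRAux.nonempty_equiv_of_eq hDmap.symm
      exact ⟨(e.substructureEquivMap D).symm.comp (n3.comp (n2.comp n1))⟩
    refine ⟨D, hDle, hDiso, ?_⟩
    have hex : ∃ dd : Fin mst → B, SameQfTp LB B astar dd ∧
        Set.range dd = ((D.map e.toHom : LB.Substructure B) : Set B) :=
      ⟨d, hd_tp, hDcoe.symm⟩
    have huniq : hex.choose = d := by
      obtain ⟨h1', h2'⟩ := hex.choose_spec
      have mono1 : StrictMono hex.choose := SRAux.sameQfTp_strictMono ltB hltB h1' hastar_mono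
      have mono2 : StrictMono d := SRAux.sameQfTp_strictMono ltB hltB hd_tp hastar_mono
      refine (StrictMono.range_inj mono1 mono2).1 ?_
      rw [h2', hDcoe]
    have hcs : cstar D = c (subC fun i => f (hex.choose (p i))) := dif_pos hex
    have hval : (fun i => f (hex.choose (p i))) = ebar := by
      rw [huniq]
      funext i
      exact hdp i
    have hA₁eq : subC ebar = A₁ := by
      show (Substructure.closure LA (Set.range ebar)).comap Csub.subtype.toHom = A₁
      have hcl : Substructure.closure LA (Set.range ebar) = A₁.map Csub.subtype.toHom := by
        rw [hrange_ebar, ← SRAux.coe_map_subtype, Substructure.closure_eq]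
      rw [hcl, SRAux.comap_map_self]
    rw [hcs, hval, hA₁eq]
  refine ⟨B', ?_, ?_⟩
  · obtain ⟨n1⟩ := SRAux.nonempty_equiv_of_eq hcl2.symm
    obtain ⟨n2⟩ := SRAux.nonempty_iso_of_sameQfTp hbbar0fuq
    obtain ⟨n3⟩ := SRAux.nonempty_equiv_of_eq hB'map.symm
    exact ⟨(Csub.subtype.substructureEquivMap B').symm.comp
      (n3.comp (n2.comp (n1.comp eb.equivRange)))⟩
  · intro A₁ A₂ hA₁le hA₂le hA₁iso hA₂iso
    obtain ⟨D₁, hD₁le, hD₁iso, hc1⟩ := key A₁ hA₁le hA₁iso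
    obtain ⟨D₂, hD₂le, hD₂iso, hc2⟩ := key A₂ hA₂le hA₂iso
    rw [hc1, hc2]
    exact hmono D₁ D₂ hD₁le hD₂le hD₁iso hD₂iso
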